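/- Let 0 < λ < μ and let A be a nonnegative random variable with E[A] = 1/λ. Suppose σ_A ∈ [0,1) satisfies the G/M/1 fixed-point equation σ_A = E[exp(−μ(1−σ_A)·A)], and σ_D ∈ [0,1) satisfies the fixed-point equation for deterministic inter-arrival time 1/λ, namely σ_D = exp(−μ(1−σ_D)/λ). Then σ_D ≤ σ_A; i.e., among all inter-arrival distributions with mean 1/λ, the deterministic one minimizes the fixed-point solution σ. -/

import Mathlib

open MeasureTheory

/-- Among all inter-arrival distributions with mean `1/λ` in a stable G/M/1 queue with
service rate `μ > λ`, the deterministic inter-arrival time minimizes the fixed-point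
solution `σ` of `σ = E[exp(−μ(1−σ)A)]`: if `σ_A` solves the fixed-point equation for an
arrival time `A ≥ 0` with `E[A] = 1/λ`, and `σ_D` solves `σ_D = exp(−μ(1−σ_D)/λ)`
(deterministic arrivals), then `σ_D ≤ σ_A`. -/
theorem deterministic_arrivals_minimize_sigma
    {Ω : Type*} [MeasureSpace Ω] [IsProbabilityMeasure (volume : Measure Ω)]
    (lam μ : ℝ) (hlam : 0 < lam) (hlm : lam < μ)
    (A : Ω → ℝ) (hA : ∀ ω, 0 ≤ A ω) (hAint : Integrable A)
    (hmean : ∫ ω, A ω = 1 / lam)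
    (σA : ℝ) (hσA : σA ∈ Set.Ico (0 : ℝ) 1)
    (hfixA : σA = ∫ ω, Real.exp (-(μ * (1 - σA)) * A ω))
    (σD : ℝ) (hσD : σD ∈ Set.Ico (0 : ℝ) 1)
    (hfixD : σD = Real.exp (-(μ * (1 - σD)) / lam)) :
    σD ≤ σA := by
  by_contra hcon
  push_neg at hcon
  set c : ℝ := μ * (1 - σA) with hc
  have hμ : 0 < μ := hlam.trans hlm
  have hlne : lam ≠ 0 := ne_of_gt hlam
  have hden : (1 : ℝ) - σA ≠ 0 := by have := hσA.2; intro h; linarith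
  have hcpos : 0 < c := mul_pos hμ (by linarith [hσA.2])
  have hfint : Integrable (fun ω => -c * A ω) := hAint.const_mul _
  have hmeas : AEStronglyMeasurable (fun ω => Real.exp (-c * A ω)) volume :=
    Real.continuous_exp.comp_aestronglyMeasurable hfint.aestronglyMeasurable
  have hbdd : ∀ᵐ ω ∂(volume : Measure Ω), ‖Real.exp (-c * A ω)‖ ≤ 1 := by
    refine Filter.Eventually.of_forall fun ω => ?_
    rw [Real.norm_eq_abs, abs_of_pos (Real.exp_pos _)]
    apply Real.exp_le_one_iff.mpr
    have := hA ω
    nlinarith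
  have hgint : Integrable (fun ω => Real.exp (-c * A ω)) :=
    (integrable_const (1 : ℝ)).mono' hmeas hbdd
  -- Jensen: exp(-c/lam) ≤ σA
  have hJ : Real.exp (-c / lam) ≤ σA := by
    have := convexOn_exp.map_integral_le (f := fun ω => -c * A ω) (μ := volume)
      Real.continuous_exp.continuousOn isClosed_univ
      (Filter.Eventually.of_forall fun _ => trivial) hfint (by exact hgint)
    rw [integral_const_mul, hmean] at this
    have h2 : -c * (1 / lam) = -c / lam := by ring
    rw [h2] at this
    simpa [hfixA] using this
  set g : ℝ → ℝ := fun x => Real.exp (μ / lam * x - μ / lam) with hg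
  have hgσD : g σD = σD := by
    have hexp : μ / lam * σD - μ / lam = -(μ * (1 - σD)) / lam := by
      field_simp
      ring
    rw [hg]; simp only
    rw [hexp, ← hfixD]
  have hgσA : g σA ≤ σA := by
    have hexp : μ / lam * σA - μ / lam = -c / lam := by
      rw [hc]; field_simp; ring
    rw [hg]; simp only
    rw [hexp]; exact hJ
  have hg1 : g 1 = 1 := by rw [hg]; simp
  have h1 : σD < 1 := hσD.2
  obtain ⟨t, ht0, ht1, htσ⟩ : ∃ t : ℝ, 0 < t ∧ t < 1 ∧ σD = t * σA + (1 - t) * 1 := by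
    refine ⟨(1 - σD) / (1 - σA), ?_, ?_, ?_⟩
    · apply div_pos <;> linarith [hσA.2]
    · rw [div_lt_one (by linarith [hσA.2])]; linarith
    · field_simp
      ring
  have hne : μ / lam * σA - μ / lam ≠ μ / lam * 1 - μ / lam := by
    have hml : 0 < μ / lam := div_pos hμ hlam
    intro h
    have : σA = 1 := by
      have := mul_left_cancel₀ (ne_of_gt hml) (by linarith : μ / lam * σA = μ / lam * 1)
      linarith
    linarith [hσA.2]
  have hsum : t + (1 - t) = 1 := by ring
  have hstrict : g σD < t * g σA + (1 - t) * g 1 := by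
    have key := strictConvexOn_exp.2 (Set.mem_univ (μ / lam * σA - μ / lam))
      (Set.mem_univ (μ / lam * 1 - μ / lam)) hne ht0 (by linarith : (0:ℝ) < 1 - t) hsum
    calc g σD = Real.exp (t • (μ / lam * σA - μ / lam) + (1 - t) • (μ / lam * 1 - μ / lam)) := by
          rw [hg]; simp only [smul_eq_mul]
          congr 1
          rw [htσ]; ring
      _ < t • Real.exp (μ / lam * σA - μ / lam) + (1 - t) • Real.exp (μ / lam * 1 - μ / lam) := key
      _ = t * g σA + (1 - t) * g 1 := by rw [hg]; simp [smul_eq_mul]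
  rw [hgσD, hg1] at hstrict
  nlinarith [hgσA]
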